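/- If R is a commutative weakly nil-clean ring, then for every maximal ideal M of R, the quotient R/M is isomorphic to either ℤ/2ℤ or ℤ/3ℤ. -/

import Mathlib

def IsWeaklyNilClean (R : Type*) [CommRing R] : Prop :=
  ∀ a : R, ∃ n e : R, IsNilpotent n ∧ IsIdempotentElem e ∧ (a = n + e ∨ a = n - e)

theorem weakly_nil_clean_residue_fields (R : Type*) [CommRing R] (h : IsWeaklyNilClean R) :
    ∀ M : Ideal R, M.IsMaximal →
      Nonempty ((R ⧸ M) ≃+* ZMod 2) ∨ Nonempty ((R ⧸ M) ≃+* ZMod 3) := by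
  intro M hM
  haveI := hM
  set K := R ⧸ M with hK
  have key : ∀ x : K, x = 0 ∨ x = 1 ∨ x = -1 := by
    intro x
    obtain ⟨a, rfl⟩ := Ideal.Quotient.mk_surjective (I := M) x
    obtain ⟨n, e, hn, he, hae⟩ := h a
    have hn' : (Ideal.Quotient.mk M n : K) = 0 := by
      have : IsNilpotent (Ideal.Quotient.mk M n : K) := hn.map _
      exact this.eq_zero
    have he' : (Ideal.Quotient.mk M e : K) = 0 ∨ (Ideal.Quotient.mk M e : K) = 1 :=
      IsIdempotentElem.iff_eq_zero_or_one.mp (he.map _)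
    rcases hae with rfl | rfl <;> rcases he' with h0 | h0 <;>
      simp [map_add, map_sub, hn', h0]
  -- 2 = 0 or 3 = 0 in K
  have hchar : (2 : K) = 0 ∨ (3 : K) = 0 := by
    rcases key 2 with h2 | h2 | h2
    · exact Or.inl h2
    · exact absurd (by linear_combination h2 : (1 : K) = 0) one_ne_zero
    · right; linear_combination h2
  rcases hchar with h2 | h3
  · left
    haveI : CharP K 2 := (CharP.charP_iff_prime_eq_zero Nat.prime_two).mpr (by exact_mod_cast h2)
    have f := ZMod.castHom (dvd_refl 2) K
    have hinj : Function.Injective f := f.injective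
    have hsurj : Function.Surjective f := by
      intro x
      rcases key x with rfl | rfl | rfl
      · exact ⟨0, map_zero f⟩
      · exact ⟨1, map_one f⟩
      · exact ⟨-1, by rw [map_neg, map_one]⟩
    exact ⟨(RingEquiv.ofBijective f ⟨hinj, hsurj⟩).symm⟩
  · right
    haveI : CharP K 3 := (CharP.charP_iff_prime_eq_zero Nat.prime_three).mpr (by exact_mod_cast h3)
    have f := ZMod.castHom (dvd_refl 3) K
    have hinj : Function.Injective f := f.injective
    have hsurj : Function.Surjective f := by
      intro x
      rcases key x with rfl | rfl | rfl
      · exact ⟨0, map_zero f⟩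
      · exact ⟨1, map_one f⟩
      · exact ⟨-1, by simp⟩
    exact ⟨(RingEquiv.ofBijective f ⟨hinj, hsurj⟩).symm⟩
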